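/- Let V be a finite set with n = |V| ≥ 1 and let D be a symmetric real V×V matrix with zero diagonal. Let J = I − (1/n)·𝟙𝟙ᵀ be the centering matrix and B = −(1/2) J D J. Then D is a squared Euclidean distance matrix — i.e., there exist K ≥ 1 and x : V → ℝ^K with D_{uv} = ‖x_u − x_v‖² for all u, v ∈ V — if and only if B is positive semidefinite. -/

import Mathlib

open Matrix Finset
open scoped RealInnerProductSpace

/-- Schoenberg's criterion: a symmetric hollow matrix `D` is a squared Euclidean
distance matrix iff `B = −(1/2) J D J` is positive semidefinite. -/
theorem sqEDM_iff_posSemidef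
    (V : Type*) [Fintype V] [DecidableEq V] [Nonempty V]
    (n : ℕ) (hn : n = Fintype.card V)
    (D : Matrix V V ℝ) (hsymm : D.IsSymm) (hdiag : ∀ v, D v v = 0)
    (J B : Matrix V V ℝ)
    (hJ : J = (1 : Matrix V V ℝ) - (n : ℝ)⁻¹ • Matrix.of (fun _ _ => (1 : ℝ)))
    (hB : B = -(1 / 2 : ℝ) • (J * D * J)) :
    (∃ K : ℕ, 1 ≤ K ∧ ∃ x : V → EuclideanSpace ℝ (Fin K),
        ∀ u v, D u v = ‖x u - x v‖ ^ 2) ↔ B.PosSemidef := by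
  have hnpos : 0 < n := hn ▸ Fintype.card_pos
  have hnR : (n : ℝ) ≠ 0 := Nat.cast_ne_zero.mpr hnpos.ne'
  have hDsym : ∀ a b, D a b = D b a := fun a b => hsymm.apply b a
  have hJsymm : Jᵀ = J := by
    subst hJ
    ext u v
    by_cases h : u = v <;> simp [Matrix.one_apply, h, eq_comm]
  have hBsymm : Bᵀ = B := by
    rw [hB, Matrix.transpose_smul, Matrix.transpose_mul, Matrix.transpose_mul,
      hJsymm, hsymm, Matrix.mul_assoc]
  -- entrywise formula for B
  have hBe : ∀ u v, B u v = -(1/2) * (D u v - (∑ a, D a v) / n - (∑ b, D u b) / n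
      + (∑ a, ∑ b, D a b) / (n^2)) := by
    intro u v
    have hJD : ∀ b, (J * D) u b = D u b - (∑ a, D a b) / n := by
      intro b
      rw [hJ]
      simp [Matrix.mul_apply, Matrix.one_apply, sub_mul, Finset.sum_sub_distrib,
        Finset.sum_ite_eq, div_eq_inv_mul, Finset.mul_sum]
    rw [hB]
    simp only [Matrix.smul_apply, smul_eq_mul, neg_mul]
    congr 1
    rw [Matrix.mul_apply]
    simp only [hJD]
    conv_lhs => rw [hJ]
    simp only [Matrix.sub_apply, Matrix.one_apply, Matrix.smul_apply, Matrix.of_apply,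
      smul_eq_mul, mul_one]
    have expand : ∀ b, (D u b - (∑ a, D a b) / n) * ((if b = v then (1:ℝ) else 0) - (n:ℝ)⁻¹)
        = (if b = v then (1:ℝ) else 0) * (D u b - (∑ a, D a b) / n)
          - (n:ℝ)⁻¹ * D u b + (n:ℝ)⁻¹ * ((∑ a, D a b) / n) := fun b => by ring
    rw [Finset.sum_congr rfl (fun b _ => expand b)]
    simp only [Finset.sum_add_distrib, Finset.sum_sub_distrib]
    simp only [ite_mul, one_mul, zero_mul, Finset.sum_ite_eq', Finset.mem_univ, if_true,
      ← Finset.mul_sum]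
    rw [← Finset.sum_div, Finset.sum_comm]
    field_simp
  have key : ∀ u v, D u v = B u u + B v v - 2 * B u v := by
    intro u v
    have hcr : ∀ p, (∑ a, D a p) = ∑ b, D p b :=
      fun p => Finset.sum_congr rfl fun a _ => hDsym a p
    rw [hBe, hBe, hBe, hdiag u, hdiag v, hcr u, hcr v]
    ring
  constructor
  · rintro ⟨K, hK, x, hx⟩
    rw [Matrix.posSemidef_iff_dotProduct_mulVec]
    constructor
    · ext i j
      rw [Matrix.conjTranspose_apply, star_trivial]
      exact congrFun (congrFun hBsymm i) j
    · intro y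
      simp only [star_trivial]
      set z : V → ℝ := J *ᵥ y with hz
      have hz0 : ∑ v, z v = 0 := by
        have : ∀ v, z v = y v - (n:ℝ)⁻¹ * ∑ a, y a := by
          intro v
          rw [hz, hJ]
          simp [Matrix.mulVec, dotProduct, Matrix.one_apply, sub_mul,
            Finset.sum_sub_distrib, Finset.sum_ite_eq, Finset.mul_sum]
        simp only [this, Finset.sum_sub_distrib, Finset.sum_const, nsmul_eq_mul,
          Finset.card_univ, ← hn]
        rw [← mul_assoc, mul_inv_cancel₀ hnR, one_mul, sub_self]
      have hform : y ⬝ᵥ (B *ᵥ y) = -(1/2) * (z ⬝ᵥ (D *ᵥ z)) := by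
        rw [hB, Matrix.smul_mulVec, dotProduct_smul, smul_eq_mul]
        congr 1
        rw [Matrix.mul_assoc, ← Matrix.mulVec_mulVec, ← Matrix.mulVec_mulVec,
          dotProduct_mulVec]
        have hvm : y ᵥ* J = J *ᵥ y := by
          conv_lhs => rw [← hJsymm]
          rw [Matrix.vecMul_transpose]
        rw [hvm, ← hz]
      set w : EuclideanSpace ℝ (Fin K) := ∑ v, z v • x v with hw
      have hww : ⟪w, w⟫ = ∑ u, ∑ v, z u * z v * ⟪x u, x v⟫ := by
        rw [hw, sum_inner]
        refine Finset.sum_congr rfl fun u _ => ?_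
        rw [inner_sum]
        refine Finset.sum_congr rfl fun v _ => ?_
        rw [real_inner_smul_left, real_inner_smul_right]
        ring
      have hquad : z ⬝ᵥ (D *ᵥ z) = -2 * ⟪w, w⟫ := by
        have step1 : z ⬝ᵥ (D *ᵥ z) = ∑ u, ∑ v, (z u * ‖x u‖^2 * z v
            + z u * (z v * ‖x v‖^2) - 2 * (z u * z v * ⟪x u, x v⟫)) := by
          simp only [dotProduct, Matrix.mulVec, Finset.mul_sum]
          refine Finset.sum_congr rfl fun u _ => Finset.sum_congr rfl fun v _ => ?_
          rw [hx u v, norm_sub_sq_real]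
          ring
        rw [step1]
        simp only [Finset.sum_add_distrib, Finset.sum_sub_distrib]
        have h1 : ∑ u, ∑ v, z u * ‖x u‖^2 * z v = 0 := by
          refine Finset.sum_eq_zero fun u _ => ?_
          rw [← Finset.mul_sum, hz0, mul_zero]
        have h2 : ∑ u, ∑ v, z u * (z v * ‖x v‖^2) = 0 := by
          simp only [← Finset.mul_sum]
          rw [← Finset.sum_mul, hz0, zero_mul]
        have h3 : ∑ u, ∑ v, 2 * (z u * z v * ⟪x u, x v⟫) = 2 * ⟪w, w⟫ := by
          rw [hww, Finset.mul_sum]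
          exact Finset.sum_congr rfl fun u _ => (Finset.mul_sum _ _ _).symm
        rw [h1, h2, h3]
        ring
      rw [hform, hquad]
      have := real_inner_self_nonneg (x := w)
      nlinarith [real_inner_self_nonneg (x := w)]
  · intro hPSD
    obtain ⟨A, hA⟩ : ∃ A : Matrix V V ℝ, B = Aᴴ * A := by
      open scoped MatrixOrder in
      obtain ⟨X, hX, -, hXX⟩ := CFC.exists_sqrt_of_isSelfAdjoint_of_quasispectrumRestricts
        hPSD.isHermitian (QuasispectrumRestricts.nnreal_of_nonneg hPSD.nonneg)
      exact ⟨X, by rw [← hXX, ← Matrix.star_eq_conjTranspose, hX.star_eq]⟩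
    refine ⟨n, hnpos, ?_⟩
    let e : V ≃ Fin n := Fintype.equivFinOfCardEq hn.symm
    refine ⟨fun v => (WithLp.toLp 2 (fun i => A (e.symm i) v) : EuclideanSpace ℝ (Fin n)), ?_⟩
    intro u v
    set x : V → EuclideanSpace ℝ (Fin n) := fun v => WithLp.toLp 2 (fun i => A (e.symm i) v) with hxdef
    have hinner : ∀ p q : V, ⟪x p, x q⟫ = B p q := by
      intro p q
      rw [hA]
      simp only [PiLp.inner_apply, RCLike.inner_apply, starRingEnd_apply, star_trivial]
      rw [Matrix.mul_apply]
      simp only [hxdef, WithLp.ofLp_toLp]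
      exact Equiv.sum_comp e.symm (fun w => A w q * A w p) |>.trans
        (Finset.sum_congr rfl fun w _ => by simp [Matrix.conjTranspose_apply, mul_comm])
    have hnorm : ∀ p, ‖x p‖^2 = B p p := fun p => by
      rw [← real_inner_self_eq_norm_sq, hinner]
    rw [norm_sub_sq_real, hnorm, hnorm, hinner, key u v]
    ring
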